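/- arXiv:1303.6943 — 3 statements merged into one kernel-verified Lean document; each statement's English description precedes it below -/
import Mathlib

section
/- Let F be the Feynman–Kac operator associated with the path measures (μ_x), the rate function c and the initial function g. Then for every T₀ ∈ (0,T], every t ∈ [0,T₀], every x ∈ E, and all bounded measurable functions u, v : [0,T₀]×E → ℝ, one has |F[u](t,x) − F[v](t,x)| ≤ ‖g‖ · e^{c₀T₀} · Lip(c) · T₀ · sup_{(s,y)∈[0,T₀]×E} |u(s,y) − v(s,y)|. In particular, F is a contraction on the space of bounded measurable functions on [0,T₀]×E with the sup norm whenever ‖g‖ · Lip(c) · T₀ · e^{c₀T₀} < 1. -/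
open MeasureTheory Set Filter

/-- The Feynman–Kac operator `F[v](t,x) = ∫ exp(∫₀ᵗ c(v(t−s, ω(s))) ds) · g(ω(t)) dμ_x(ω)`
on the space of continuous paths `ω : [0,T] → E`. -/
noncomputable def FeynmanKac {E : Type*} [TopologicalSpace E] [MeasurableSpace E]
    {T : ℝ} (hT : 0 ≤ T) [MeasurableSpace C(Set.Icc (0:ℝ) T, E)]
    (μ : E → Measure C(Set.Icc (0:ℝ) T, E))
    (c : ℝ → ℝ) (g : E → ℝ) (v : ℝ → E → ℝ) (t : ℝ) (x : E) : ℝ :=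
  ∫ ω, Real.exp (∫ s in (0:ℝ)..t, c (v (t - s) (ω (Set.projIcc 0 T hT s))))
      * g (ω (Set.projIcc 0 T hT t)) ∂(μ x)

/-- Mean-value estimate for the exponential on `(-∞, C]`. -/
lemma abs_exp_sub_exp_le {a b C : ℝ} (ha : a ≤ C) (hb : b ≤ C) :
    |Real.exp a - Real.exp b| ≤ Real.exp C * |a - b| := by
  wlog hab : b ≤ a generalizing a b
  · rw [abs_sub_comm, abs_sub_comm a b]; exact this hb ha (le_of_not_ge hab)
  rw [abs_of_nonneg (sub_nonneg.2 (Real.exp_le_exp.2 hab)),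
    abs_of_nonneg (sub_nonneg.2 hab)]
  have h1 : Real.exp (b - a) ≥ (b - a) + 1 := Real.add_one_le_exp _
  have h2 : Real.exp b = Real.exp a * Real.exp (b - a) := by
    rw [← Real.exp_add]; ring_nf
  have h3 : Real.exp a ≤ Real.exp C := Real.exp_le_exp.2 ha
  have h4 : 0 < Real.exp a := Real.exp_pos a
  nlinarith [Real.exp_pos C]

/-- The basic contraction estimate for the Feynman–Kac operator:
`|F[u](t,x) − F[v](t,x)| ≤ ‖g‖ e^{c₀T₀} Lip(c) T₀ sup|u−v|`. -/
theorem feynmanKac_contraction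
    {E : Type*} [MetricSpace E] [PolishSpace E] [MeasurableSpace E] [BorelSpace E]
    {T : ℝ} (hT : 0 < T)
    [MeasurableSpace C(Set.Icc (0:ℝ) T, E)] [BorelSpace C(Set.Icc (0:ℝ) T, E)]
    (μ : E → Measure C(Set.Icc (0:ℝ) T, E)) (hμmeas : Measurable μ)
    (hμ : ∀ x, IsProbabilityMeasure (μ x))
    (c : ℝ → ℝ) (Lc : NNReal) (hc : LipschitzWith Lc c)
    (c₀ : ℝ) (hc₀ : ∀ u : ℝ, 0 ≤ c u ∧ c u ≤ c₀)
    (g : E → ℝ) (hgm : Measurable g) (G : ℝ) (hG : ∀ x, |g x| ≤ G)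
    (T₀ : ℝ) (hT₀ : 0 < T₀) (hT₀T : T₀ ≤ T)
    (u v : ℝ → E → ℝ)
    (hum : Measurable (Function.uncurry u)) (hvm : Measurable (Function.uncurry v))
    (Cu : ℝ) (hub : ∀ s y, |u s y| ≤ Cu) (Cv : ℝ) (hvb : ∀ s y, |v s y| ≤ Cv)
    (M : ℝ) (hM : ∀ s ∈ Set.Icc (0:ℝ) T₀, ∀ y : E, |u s y - v s y| ≤ M)
    (t : ℝ) (ht : t ∈ Set.Icc (0:ℝ) T₀) (x : E) :
    |FeynmanKac hT.le μ c g u t x - FeynmanKac hT.le μ c g v t x|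
      ≤ G * Real.exp (c₀ * T₀) * (Lc : ℝ) * T₀ * M := by
  haveI := hμ x
  obtain ⟨ht0, htT₀⟩ := ht
  set pI := Set.projIcc (0:ℝ) T hT.le with hpI
  have hc₀0 : 0 ≤ c₀ := (hc₀ 0).1.trans (hc₀ 0).2
  have hM0 : 0 ≤ M := (abs_nonneg _).trans (hM 0 ⟨le_refl _, hT₀.le⟩ x)
  have hG0 : 0 ≤ G := (abs_nonneg _).trans (hG x)
  -- the integrand inner exponent
  set A : (ℝ → E → ℝ) → C(Set.Icc (0:ℝ) T, E) → ℝ :=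
    fun w ω => ∫ s in (0:ℝ)..t, c (w (t - s) (ω (pI s))) with hA
  -- pointwise measurability in s for each ω
  have hsect : ∀ (w : ℝ → E → ℝ), Measurable (Function.uncurry w) →
      ∀ ω : C(Set.Icc (0:ℝ) T, E), Measurable fun s : ℝ => c (w (t - s) (ω (pI s))) := by
    intro w hw ω
    have h1 : Measurable fun s : ℝ => ((t - s, ω (pI s)) : ℝ × E) :=
      (measurable_const.sub measurable_id).prodMk
        ((ω.continuous.comp continuous_projIcc).measurable)
    exact hc.continuous.measurable.comp (hw.comp h1)
  -- interval integrability of the inner integrand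
  have hII : ∀ (w : ℝ → E → ℝ), Measurable (Function.uncurry w) →
      ∀ ω : C(Set.Icc (0:ℝ) T, E),
        IntervalIntegrable (fun s : ℝ => c (w (t - s) (ω (pI s)))) volume 0 t := by
    intro w hw ω
    refine IntervalIntegrable.mono_fun' (g := fun _ => c₀) intervalIntegrable_const
      ((hsect w hw ω).aestronglyMeasurable) (ae_of_all _ fun s => ?_)
    show ‖c (w (t - s) (ω (pI s)))‖ ≤ c₀
    rw [Real.norm_eq_abs, abs_of_nonneg (hc₀ _).1]
    exact (hc₀ _).2
  -- bounds on the inner integral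
  have hAle : ∀ (w : ℝ → E → ℝ), Measurable (Function.uncurry w) →
      ∀ ω, A w ω ≤ c₀ * T₀ := by
    intro w hw ω
    have : A w ω ≤ ∫ _ in (0:ℝ)..t, c₀ := by
      refine intervalIntegral.integral_mono_on ht0 (hII w hw ω) intervalIntegrable_const
        fun s _ => (hc₀ _).2
    rw [intervalIntegral.integral_const, smul_eq_mul, sub_zero] at this
    calc A w ω ≤ t * c₀ := this
      _ ≤ c₀ * T₀ := by nlinarith
  -- measurability of the full integrand
  have hmeas : ∀ (w : ℝ → E → ℝ), Measurable (Function.uncurry w) →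
      Measurable fun ω : C(Set.Icc (0:ℝ) T, E) =>
        Real.exp (A w ω) * g (ω (pI t)) := by
    intro w hw
    have heval : ∀ r : ℝ, Measurable fun ω : C(Set.Icc (0:ℝ) T, E) => ω (pI r) :=
      fun r => (continuous_eval_const (pI r)).measurable
    have hAm : Measurable (A w) := by
      have hjoint : Measurable fun p : C(Set.Icc (0:ℝ) T, E) × ℝ =>
          c (w (t - p.2) (p.1 (pI p.2))) := by
        have h0 : Continuous fun p : C(Set.Icc (0:ℝ) T, E) × ℝ =>
            ((p.1, pI p.2) : C(Set.Icc (0:ℝ) T, E) × Set.Icc (0:ℝ) T) := by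
          refine continuous_fst.prodMk ?_
          exact continuous_projIcc.comp continuous_snd
        have h1 : Continuous fun p : C(Set.Icc (0:ℝ) T, E) × ℝ => p.1 (pI p.2) :=
          continuous_eval.comp h0
        have h2 : Measurable fun p : C(Set.Icc (0:ℝ) T, E) × ℝ =>
            ((t - p.2, p.1 (pI p.2)) : ℝ × E) :=
          (measurable_const.sub measurable_snd).prodMk h1.measurable
        exact hc.continuous.measurable.comp (hw.comp h2)
      have : Measurable fun ω : C(Set.Icc (0:ℝ) T, E) =>
          ∫ s in Ioc (0:ℝ) t, c (w (t - s) (ω (pI s))) := by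
        exact (hjoint.stronglyMeasurable.integral_prod_right').measurable
      simpa only [hA, intervalIntegral.integral_of_le ht0] using this
    exact (Real.measurable_exp.comp hAm).mul (hgm.comp (heval t))
  -- integrability of the full integrand
  have hint : ∀ (w : ℝ → E → ℝ), Measurable (Function.uncurry w) →
      Integrable (fun ω => Real.exp (A w ω) * g (ω (pI t))) (μ x) := by
    intro w hw
    refine Integrable.mono' (integrable_const (Real.exp (c₀ * T₀) * G))
      (hmeas w hw).aestronglyMeasurable (ae_of_all _ fun ω => ?_)
    rw [norm_mul, Real.norm_eq_abs, Real.norm_eq_abs, Real.abs_exp]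
    exact mul_le_mul (Real.exp_le_exp.2 (hAle w hw ω)) (hG _) (abs_nonneg _)
      (Real.exp_pos _).le
  -- pointwise bound on the difference
  have hpt : ∀ ω : C(Set.Icc (0:ℝ) T, E),
      ‖Real.exp (A u ω) * g (ω (pI t)) - Real.exp (A v ω) * g (ω (pI t))‖
        ≤ G * Real.exp (c₀ * T₀) * (Lc : ℝ) * T₀ * M := by
    intro ω
    have hAd : |A u ω - A v ω| ≤ (Lc : ℝ) * M * t := by
      have := intervalIntegral.integral_sub (hII u hum ω) (hII v hvm ω)
      rw [hA]
      rw [← this]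
      have hb : ∀ s ∈ Set.uIoc (0:ℝ) t,
          ‖c (u (t - s) (ω (pI s))) - c (v (t - s) (ω (pI s)))‖ ≤ (Lc : ℝ) * M := by
        intro s hs
        rw [Set.uIoc_of_le ht0] at hs
        have hts : t - s ∈ Set.Icc (0:ℝ) T₀ :=
          ⟨by linarith [hs.2], by linarith [hs.1, htT₀]⟩
        calc ‖c (u (t - s) (ω (pI s))) - c (v (t - s) (ω (pI s)))‖
            ≤ (Lc : ℝ) * ‖u (t - s) (ω (pI s)) - v (t - s) (ω (pI s))‖ := by
              simpa [Real.dist_eq] using hc.dist_le_mul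
                (u (t - s) (ω (pI s))) (v (t - s) (ω (pI s)))
          _ ≤ (Lc : ℝ) * M := by
              refine mul_le_mul_of_nonneg_left ?_ (Lc.coe_nonneg)
              simpa [Real.norm_eq_abs] using hM _ hts (ω (pI s))
      have := intervalIntegral.norm_integral_le_of_norm_le_const hb
      simpa [Real.norm_eq_abs, abs_of_nonneg ht0] using this
    have hexp : |Real.exp (A u ω) - Real.exp (A v ω)|
        ≤ Real.exp (c₀ * T₀) * ((Lc : ℝ) * M * t) := by
      refine le_trans (abs_exp_sub_exp_le (hAle u hum ω) (hAle v hvm ω)) ?_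
      exact mul_le_mul_of_nonneg_left hAd (Real.exp_pos _).le
    rw [← sub_mul, Real.norm_eq_abs, abs_mul]
    calc |Real.exp (A u ω) - Real.exp (A v ω)| * |g (ω (pI t))|
        ≤ (Real.exp (c₀ * T₀) * ((Lc : ℝ) * M * t)) * G := by
          refine mul_le_mul hexp (hG _) (abs_nonneg _) ?_
          positivity
      _ ≤ G * Real.exp (c₀ * T₀) * (Lc : ℝ) * T₀ * M := by
          have hLc : (0:ℝ) ≤ (Lc : ℝ) := Lc.coe_nonneg
          have he : (0:ℝ) < Real.exp (c₀ * T₀) := Real.exp_pos _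
          nlinarith [mul_nonneg (mul_nonneg hLc hM0) (sub_nonneg.2 htT₀),
            mul_nonneg hG0 he.le]
  -- conclude
  rw [FeynmanKac, FeynmanKac, ← integral_sub (hint u hum) (hint v hvm)]
  have := norm_integral_le_of_norm_le_const (μ := μ x)
    (f := fun ω => Real.exp (A u ω) * g (ω (pI t))
      - Real.exp (A v ω) * g (ω (pI t)))
    (C := G * Real.exp (c₀ * T₀) * (Lc : ℝ) * T₀ * M) (ae_of_all _ hpt)
  simpa [Real.norm_eq_abs, measure_univ] using this
end

section
/- For every λ ∈ ℝ, the function x ↦ u(x,λ) = Σ_{n≥0} λⁿ u⁽ⁿ⁾(x) is continuously differentiable on [0,r] with l(x) · ∂ₓu(x,λ) = Σ_{n≥0} λ^{n+1} ∫₀ˣ 2 l(y) u⁽ⁿ⁾(y) dy. Moreover x ↦ l(x) · ∂ₓu(x,λ) is differentiable on (0,r) with derivative 2λ l(x) u(x,λ); in particular u(·,λ) solves the Sturm–Liouville equation (l u')' = 2λ l u with u(0,λ) = 1 and l(0)·∂ₓu(0,λ) = 0. -/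
open MeasureTheory Set Filter
open scoped Interval

/-- The Feller iterates `u⁽⁰⁾ = 1`,
`u⁽ⁿ⁺¹⁾(x) = ∫₀ˣ (1/l(y)) (∫₀ʸ 2 l(s) u⁽ⁿ⁾(s) ds) dy`, associated with the generalized
operator `D_m D_p` with speed measure `dm = 2l(x)dx` and scale `dp = dx/l(x)`. -/
noncomputable def fellerIterate (l : ℝ → ℝ) : ℕ → ℝ → ℝ
  | 0, _ => 1
  | n + 1, x => ∫ y in (0:ℝ)..x, (l y)⁻¹ * ∫ s in (0:ℝ)..y, 2 * l s * fellerIterate l n s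

section Aux

variable {r lo hi : ℝ} {l : ℝ → ℝ}

lemma primitive_hasDerivWithinAt {f : ℝ → ℝ} (hf : ContinuousOn f (Icc 0 r))
    {x : ℝ} (hx : x ∈ Icc (0:ℝ) r) :
    HasDerivWithinAt (fun u => ∫ y in (0:ℝ)..u, f y) (f x) (Icc 0 r) x := by
  haveI : Fact (x ∈ Icc (0:ℝ) r) := ⟨hx⟩
  refine intervalIntegral.integral_hasDerivWithinAt_right ?_
    (hf.stronglyMeasurableAtFilter_nhdsWithin measurableSet_Icc x) (hf x hx)
  have : ContinuousOn f (uIcc 0 x) := by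
    rw [uIcc_of_le hx.1]
    exact hf.mono (Icc_subset_Icc le_rfl hx.2)
  exact this.intervalIntegrable

lemma primitive_continuousOn {f : ℝ → ℝ} (hf : ContinuousOn f (Icc 0 r)) :
    ContinuousOn (fun u => ∫ y in (0:ℝ)..u, f y) (Icc 0 r) :=
  fun _ hx => (primitive_hasDerivWithinAt hf hx).continuousWithinAt

lemma feller_cont (hl : ContinuousOn l (Icc 0 r))
    (hbd : ∀ x ∈ Icc (0:ℝ) r, lo ≤ l x ∧ l x ≤ hi) (hlo : 0 < lo) :
    ∀ n, ContinuousOn (fellerIterate l n) (Icc 0 r) := by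
  intro n
  induction n with
  | zero => exact continuousOn_const
  | succ n ih =>
    show ContinuousOn (fun x => ∫ y in (0:ℝ)..x,
      (l y)⁻¹ * ∫ s in (0:ℝ)..y, 2 * l s * fellerIterate l n s) (Icc 0 r)
    refine primitive_continuousOn ?_
    have hinv : ContinuousOn (fun y => (l y)⁻¹) (Icc 0 r) :=
      hl.inv₀ fun y hy => ne_of_gt (lt_of_lt_of_le hlo (hbd y hy).1)
    exact hinv.mul (primitive_continuousOn ((continuousOn_const.mul hl).mul ih))

lemma feller_bound (hr : 0 < r) (hlo : 0 < lo) (hlohi : lo ≤ hi)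
    (hbd : ∀ x ∈ Icc (0:ℝ) r, lo ≤ l x ∧ l x ≤ hi) :
    ∀ n, ∀ x ∈ Icc (0:ℝ) r,
      |fellerIterate l n x| ≤ (2*hi*r/lo)^n * x^n / n.factorial := by
  have hhi : 0 < hi := lt_of_lt_of_le hlo hlohi
  set c : ℝ := 2*hi*r/lo with hc
  have hcpos : 0 < c := by positivity
  intro n
  induction n with
  | zero => intro x hx; simp [fellerIterate]
  | succ n ih =>
    have hvb : ∀ y ∈ Icc (0:ℝ) r, |∫ s in (0:ℝ)..y, 2 * l s * fellerIterate l n s| ≤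
        2*hi*c^n/(n.factorial) * (y^(n+1)/(n+1)) := by
      intro y hy
      have hint : IntervalIntegrable (fun s => 2*hi*c^n/(n.factorial) * s^n) volume 0 y :=
        (continuous_const.mul (continuous_pow n)).intervalIntegrable 0 y
      have hb : ∀ᵐ t ∂(volume.restrict (Ι (0:ℝ) y)),
          ‖2 * l t * fellerIterate l n t‖ ≤ 2*hi*c^n/(n.factorial) * t^n := by
        refine ae_restrict_iff' measurableSet_uIoc |>.2 (ae_of_all _ fun t ht => ?_)
        rw [uIoc_of_le hy.1] at ht
        have htIcc : t ∈ Icc (0:ℝ) r := ⟨ht.1.le, ht.2.trans hy.2⟩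
        have h1 : |2 * l t| ≤ 2 * hi := by
          rw [abs_of_nonneg (by nlinarith [(hbd t htIcc).1])]
          nlinarith [(hbd t htIcc).2]
        have h2 := ih t htIcc
        calc ‖2 * l t * fellerIterate l n t‖ = |2 * l t| * |fellerIterate l n t| := abs_mul _ _
          _ ≤ (2*hi) * (c^n * t^n / n.factorial) :=
              mul_le_mul h1 h2 (abs_nonneg _) (by positivity)
          _ = 2*hi*c^n/(n.factorial) * t^n := by ring
      calc |∫ s in (0:ℝ)..y, 2 * l s * fellerIterate l n s|
          ≤ |∫ s in (0:ℝ)..y, 2*hi*c^n/(n.factorial) * s^n| :=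
            intervalIntegral.norm_integral_le_abs_of_norm_le hb hint
        _ = |2*hi*c^n/(n.factorial) * (y^(n+1)/(n+1))| := by
            rw [intervalIntegral.integral_const_mul, integral_pow]
            norm_num
        _ = 2*hi*c^n/(n.factorial) * (y^(n+1)/(n+1)) := by
            rw [abs_of_nonneg]
            have : (0:ℝ) ≤ y := hy.1
            positivity
    intro x hx
    have hint2 : IntervalIntegrable
        (fun y => lo⁻¹ * (2*hi*c^n/(n.factorial)) / (n+1) * y^(n+1)) volume 0 x :=
      (continuous_const.mul (continuous_pow _)).intervalIntegrable 0 x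
    have hb2 : ∀ᵐ t ∂(volume.restrict (Ι (0:ℝ) x)),
        ‖(l t)⁻¹ * ∫ s in (0:ℝ)..t, 2 * l s * fellerIterate l n s‖ ≤
          lo⁻¹ * (2*hi*c^n/(n.factorial)) / (n+1) * t^(n+1) := by
      refine ae_restrict_iff' measurableSet_uIoc |>.2 (ae_of_all _ fun t ht => ?_)
      rw [uIoc_of_le hx.1] at ht
      have htIcc : t ∈ Icc (0:ℝ) r := ⟨ht.1.le, ht.2.trans hx.2⟩
      have hlt := (hbd t htIcc).1
      have hltpos : 0 < l t := lt_of_lt_of_le hlo hlt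
      have h1 : |(l t)⁻¹| ≤ lo⁻¹ := by
        rw [abs_of_nonneg (inv_nonneg.2 hltpos.le)]
        exact inv_anti₀ hlo hlt
      calc ‖(l t)⁻¹ * ∫ s in (0:ℝ)..t, 2 * l s * fellerIterate l n s‖
          = |(l t)⁻¹| * |∫ s in (0:ℝ)..t, 2 * l s * fellerIterate l n s| := abs_mul _ _
        _ ≤ lo⁻¹ * (2*hi*c^n/(n.factorial) * (t^(n+1)/(n+1))) :=
            mul_le_mul h1 (hvb t htIcc) (abs_nonneg _) (by positivity)
        _ = lo⁻¹ * (2*hi*c^n/(n.factorial)) / (n+1) * t^(n+1) := by ring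
    have hx0 : (0:ℝ) ≤ x := hx.1
    have key : |fellerIterate l (n+1) x| ≤
        lo⁻¹ * (2*hi*c^n/(n.factorial)) / (n+1) * (x^(n+2)/(n+2)) := by
      calc |fellerIterate l (n+1) x|
          = |∫ y in (0:ℝ)..x, (l y)⁻¹ * ∫ s in (0:ℝ)..y, 2 * l s * fellerIterate l n s| := by
            rfl
        _ ≤ |∫ y in (0:ℝ)..x, lo⁻¹ * (2*hi*c^n/(n.factorial)) / (n+1) * y^(n+1)| :=
            intervalIntegral.norm_integral_le_abs_of_norm_le hb2 hint2
        _ = |lo⁻¹ * (2*hi*c^n/(n.factorial)) / (n+1) * (x^(n+2)/(n+2))| := by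
            rw [intervalIntegral.integral_const_mul, integral_pow]
            push_cast; ring_nf
        _ = lo⁻¹ * (2*hi*c^n/(n.factorial)) / (n+1) * (x^(n+2)/(n+2)) := by
            rw [abs_of_nonneg]; positivity
    refine key.trans ?_
    have hpow : x^(n+2)/(n+2) ≤ r * x^(n+1) := by
      have h1 : x^(n+2) ≤ r * x^(n+1) := by
        rw [pow_succ]
        calc x^(n+1) * x ≤ x^(n+1) * r :=
              mul_le_mul_of_nonneg_left hx.2 (by positivity)
          _ = r * x^(n+1) := mul_comm _ _
      calc x^(n+2)/(n+2) ≤ x^(n+2) := by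
            apply div_le_self (by positivity)
            have h := Nat.cast_nonneg (α := ℝ) n
            linarith
        _ ≤ r * x^(n+1) := h1
    calc lo⁻¹ * (2*hi*c^n/(n.factorial)) / (n+1) * (x^(n+2)/(n+2))
        ≤ lo⁻¹ * (2*hi*c^n/(n.factorial)) / (n+1) * (r * x^(n+1)) :=
          mul_le_mul_of_nonneg_left hpow (by positivity)
      _ = c^(n+1) * x^(n+1) / (n+1).factorial := by
          rw [hc, Nat.factorial_succ]
          have h1 : ((n:ℝ)+1) ≠ 0 := by positivity
          have h2 : ((n.factorial:ℝ)) ≠ 0 := Nat.cast_ne_zero.2 n.factorial_ne_zero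
          have h3 : lo ≠ 0 := hlo.ne'
          push_cast
          field_simp
          linear_combination (-(hi * hi ^ n * r * r ^ n * lo⁻¹ ^ n * x * x ^ n * 2 ^ n * 2)) * mul_inv_cancel₀ h3

end Aux

/-- `u(x,λ) = Σ λⁿ u⁽ⁿ⁾(x)` is continuously differentiable on `[0,r]` with
`l(x) ∂ₓu(x,λ) = Σ λ^{n+1} ∫₀ˣ 2 l(y) u⁽ⁿ⁾(y) dy`; moreover `x ↦ l(x) ∂ₓu(x,λ)` is
differentiable on `(0,r)` with derivative `2λ l(x) u(x,λ)`, so that `u(·,λ)` solves the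
Sturm–Liouville equation `(l u')' = 2λ l u` with `u(0,λ) = 1`, `l(0) ∂ₓu(0,λ) = 0`. -/
theorem fellerSeries_solves_SturmLiouville
    (r lo hi : ℝ) (hr : 0 < r) (hlo : 0 < lo) (hlohi : lo ≤ hi)
    (l : ℝ → ℝ) (hl : ContinuousOn l (Set.Icc 0 r))
    (hbd : ∀ x ∈ Set.Icc (0:ℝ) r, lo ≤ l x ∧ l x ≤ hi) (lam : ℝ) :
    let U : ℝ → ℝ := fun x => ∑' n : ℕ, lam ^ n * fellerIterate l n x
    let U' : ℝ → ℝ := fun x =>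
      (l x)⁻¹ * ∑' n : ℕ, lam ^ (n + 1) * ∫ y in (0:ℝ)..x, 2 * l y * fellerIterate l n y
    (∀ x ∈ Set.Icc (0:ℝ) r, HasDerivWithinAt U (U' x) (Set.Icc 0 r) x) ∧
    ContinuousOn U' (Set.Icc 0 r) ∧
    (∀ x ∈ Set.Icc (0:ℝ) r,
      l x * U' x = ∑' n : ℕ, lam ^ (n + 1) * ∫ y in (0:ℝ)..x, 2 * l y * fellerIterate l n y) ∧
    (∀ x ∈ Set.Ioo (0:ℝ) r, HasDerivAt (fun z => l z * U' z) (2 * lam * l x * U x) x) ∧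
    U 0 = 1 ∧ l 0 * U' 0 = 0 := by
  intro U U'
  have hhi : 0 < hi := lt_of_lt_of_le hlo hlohi
  set c : ℝ := 2*hi*r/lo with hc
  have hcpos : 0 < c := by positivity
  have hlne : ∀ x ∈ Icc (0:ℝ) r, l x ≠ 0 :=
    fun x hx => ne_of_gt (lt_of_lt_of_le hlo (hbd x hx).1)
  have hinv : ContinuousOn (fun y => (l y)⁻¹) (Icc 0 r) := hl.inv₀ hlne
  have hucont : ∀ n, ContinuousOn (fellerIterate l n) (Icc 0 r) := feller_cont hl hbd hlo
  have hub : ∀ n, ∀ x ∈ Icc (0:ℝ) r, |fellerIterate l n x| ≤ c^n * r^n / n.factorial := by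
    intro n x hx
    refine (feller_bound hr hlo hlohi hbd n x hx).trans ?_
    gcongr
    exacts [hx.1, hx.2]
  have hvcont : ∀ n, ContinuousOn
      (fun x => ∫ y in (0:ℝ)..x, 2 * l y * fellerIterate l n y) (Icc 0 r) :=
    fun n => primitive_continuousOn ((continuousOn_const.mul hl).mul (hucont n))
  have hvb : ∀ n, ∀ x ∈ Icc (0:ℝ) r,
      |∫ y in (0:ℝ)..x, 2 * l y * fellerIterate l n y| ≤ 2*hi*r*(c^n * r^n / n.factorial) := by
    intro n x hx
    have hptw : ∀ t ∈ Ι (0:ℝ) x, ‖2 * l t * fellerIterate l n t‖ ≤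
        2*hi*(c^n * r^n / n.factorial) := by
      intro t ht
      rw [uIoc_of_le hx.1] at ht
      have htIcc : t ∈ Icc (0:ℝ) r := ⟨ht.1.le, ht.2.trans hx.2⟩
      have h1 : |2 * l t| ≤ 2 * hi := by
        rw [abs_of_nonneg (by nlinarith [(hbd t htIcc).1])]
        nlinarith [(hbd t htIcc).2]
      calc ‖2 * l t * fellerIterate l n t‖ = |2 * l t| * |fellerIterate l n t| := abs_mul _ _
        _ ≤ (2*hi) * (c^n * r^n / n.factorial) :=
            mul_le_mul h1 (hub n t htIcc) (abs_nonneg _) (by positivity)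
        _ = 2*hi*(c^n * r^n / n.factorial) := by ring
    calc |∫ y in (0:ℝ)..x, 2 * l y * fellerIterate l n y|
        ≤ 2*hi*(c^n * r^n / n.factorial) * |x - 0| :=
          intervalIntegral.norm_integral_le_of_norm_le_const hptw
      _ ≤ 2*hi*r*(c^n * r^n / n.factorial) := by
          rw [sub_zero, abs_of_nonneg hx.1]
          have hA : (0:ℝ) ≤ c^n * r^n / n.factorial := by positivity
          nlinarith [mul_le_mul_of_nonneg_left hx.2
            (mul_nonneg (mul_nonneg zero_le_two hhi.le) hA)]
  -- summability
  have hsa : Summable (fun n : ℕ => (|lam| * c * r)^n / n.factorial) :=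
    Real.summable_pow_div_factorial _
  have hUsum : ∀ x ∈ Icc (0:ℝ) r, Summable (fun n => lam^n * fellerIterate l n x) := by
    intro x hx
    refine Summable.of_norm_bounded hsa fun n => ?_
    calc ‖lam^n * fellerIterate l n x‖ = |lam|^n * |fellerIterate l n x| := by
          rw [norm_mul, norm_pow]; rfl
      _ ≤ |lam|^n * (c^n * r^n / n.factorial) :=
          mul_le_mul_of_nonneg_left (hub n x hx) (by positivity)
      _ = (|lam| * c * r)^n / n.factorial := by rw [mul_pow, mul_pow]; ring
  have hGsum : ∀ x ∈ Icc (0:ℝ) r,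
      Summable (fun n => lam^(n+1) * ∫ y in (0:ℝ)..x, 2 * l y * fellerIterate l n y) := by
    intro x hx
    refine Summable.of_norm_bounded ((hsa.mul_left (|lam| * (2*hi*r)))) fun n => ?_
    calc ‖lam^(n+1) * ∫ y in (0:ℝ)..x, 2 * l y * fellerIterate l n y‖
        = |lam|^(n+1) * |∫ y in (0:ℝ)..x, 2 * l y * fellerIterate l n y| := by
          rw [norm_mul, norm_pow]; rfl
      _ ≤ |lam|^(n+1) * (2*hi*r*(c^n * r^n / n.factorial)) :=
          mul_le_mul_of_nonneg_left (hvb n x hx) (by positivity)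
      _ = |lam| * (2*hi*r) * ((|lam| * c * r)^n / n.factorial) := by
          rw [pow_succ, mul_pow, mul_pow]; ring
  -- continuity of G and U
  have hGcont : ContinuousOn
      (fun x => ∑' n : ℕ, lam^(n+1) * ∫ y in (0:ℝ)..x, 2 * l y * fellerIterate l n y)
      (Icc 0 r) := by
    refine continuousOn_tsum (fun n => continuousOn_const.mul (hvcont n))
      (hsa.mul_left (|lam| * (2*hi*r))) fun n x hx => ?_
    calc ‖lam^(n+1) * ∫ y in (0:ℝ)..x, 2 * l y * fellerIterate l n y‖
        = |lam|^(n+1) * |∫ y in (0:ℝ)..x, 2 * l y * fellerIterate l n y| := by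
          rw [norm_mul, norm_pow]; rfl
      _ ≤ |lam|^(n+1) * (2*hi*r*(c^n * r^n / n.factorial)) :=
          mul_le_mul_of_nonneg_left (hvb n x hx) (by positivity)
      _ = |lam| * (2*hi*r) * ((|lam| * c * r)^n / n.factorial) := by
          rw [pow_succ, mul_pow, mul_pow]; ring
  have hUcont : ContinuousOn (fun x => ∑' n : ℕ, lam^n * fellerIterate l n x) (Icc 0 r) := by
    refine continuousOn_tsum (fun n => continuousOn_const.mul (hucont n)) hsa fun n x hx => ?_
    calc ‖lam^n * fellerIterate l n x‖ = |lam|^n * |fellerIterate l n x| := by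
          rw [norm_mul, norm_pow]; rfl
      _ ≤ |lam|^n * (c^n * r^n / n.factorial) :=
          mul_le_mul_of_nonneg_left (hub n x hx) (by positivity)
      _ = (|lam| * c * r)^n / n.factorial := by rw [mul_pow, mul_pow]; ring
  -- first exchange of sum and integral
  have hswap1 : ∀ x ∈ Icc (0:ℝ) r,
      HasSum (fun n : ℕ => ∫ y in (0:ℝ)..x,
          lam^(n+1) * ((l y)⁻¹ * ∫ s in (0:ℝ)..y, 2 * l s * fellerIterate l n s))
        (∫ y in (0:ℝ)..x, (l y)⁻¹ *
          ∑' n : ℕ, lam^(n+1) * ∫ s in (0:ℝ)..y, 2 * l s * fellerIterate l n s) := by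
    intro x hx
    have hsub : Ι (0:ℝ) x ⊆ Icc (0:ℝ) r := by
      rw [uIoc_of_le hx.1]
      exact Ioc_subset_Icc_self.trans (Icc_subset_Icc le_rfl hx.2)
    have hbsum : Summable (fun n : ℕ =>
        |lam|^(n+1) * (lo⁻¹ * (2*hi*r*(c^n * r^n / n.factorial)))) := by
      refine (hsa.mul_left (|lam| * (lo⁻¹ * (2*hi*r)))).congr fun n => ?_
      rw [pow_succ, mul_pow, mul_pow]; ring
    refine intervalIntegral.hasSum_integral_of_dominated_convergence
      (bound := fun n _ => |lam|^(n+1) * (lo⁻¹ * (2*hi*r*(c^n * r^n / n.factorial))))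
      (fun n => ?_) (fun n => ae_of_all _ fun t ht => ?_) (ae_of_all _ fun t _ => hbsum)
      intervalIntegrable_const (ae_of_all _ fun t ht => ?_)
    · exact ((continuousOn_const.mul (hinv.mul (hvcont n))).mono hsub).aestronglyMeasurable
        measurableSet_uIoc
    · have htIcc := hsub ht
      have hltpos : 0 < l t := lt_of_lt_of_le hlo (hbd t htIcc).1
      have h1 : |(l t)⁻¹| ≤ lo⁻¹ := by
        rw [abs_of_nonneg (inv_nonneg.2 hltpos.le)]
        exact inv_anti₀ hlo (hbd t htIcc).1
      calc ‖lam^(n+1) * ((l t)⁻¹ * ∫ s in (0:ℝ)..t, 2 * l s * fellerIterate l n s)‖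
          = |lam|^(n+1) * (|(l t)⁻¹| * |∫ s in (0:ℝ)..t, 2 * l s * fellerIterate l n s|) := by
            rw [norm_mul, norm_pow, norm_mul]; rfl
        _ ≤ |lam|^(n+1) * (lo⁻¹ * (2*hi*r*(c^n * r^n / n.factorial))) := by
            refine mul_le_mul_of_nonneg_left ?_ (by positivity)
            exact mul_le_mul h1 (hvb n t htIcc) (abs_nonneg _) (by positivity)
    · have htIcc := hsub ht
      have h2 : (fun n : ℕ => lam^(n+1) *
            ((l t)⁻¹ * ∫ s in (0:ℝ)..t, 2 * l s * fellerIterate l n s))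
          = fun n : ℕ => (l t)⁻¹ *
            (lam^(n+1) * ∫ s in (0:ℝ)..t, 2 * l s * fellerIterate l n s) := by
        funext n; ring
      rw [h2]
      exact (hGsum t htIcc).hasSum.mul_left _
  -- the integral equation for U
  have hUeq : ∀ x ∈ Icc (0:ℝ) r,
      (∑' n : ℕ, lam^n * fellerIterate l n x) = 1 + ∫ y in (0:ℝ)..x,
        (l y)⁻¹ * ∑' n : ℕ, lam^(n+1) * ∫ s in (0:ℝ)..y, 2 * l s * fellerIterate l n s := by
    intro x hx
    have e1 : ∀ n : ℕ, (∫ y in (0:ℝ)..x,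
          lam^(n+1) * ((l y)⁻¹ * ∫ s in (0:ℝ)..y, 2 * l s * fellerIterate l n s))
        = lam^(n+1) * fellerIterate l (n+1) x := fun n => by
      rw [intervalIntegral.integral_const_mul]; rfl
    calc (∑' n : ℕ, lam^n * fellerIterate l n x)
        = lam^0 * fellerIterate l 0 x + ∑' n : ℕ, lam^(n+1) * fellerIterate l (n+1) x :=
          Summable.tsum_eq_zero_add (hUsum x hx)
      _ = 1 + ∑' n : ℕ, ∫ y in (0:ℝ)..x,
            lam^(n+1) * ((l y)⁻¹ * ∫ s in (0:ℝ)..y, 2 * l s * fellerIterate l n s) := by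
          congr 1
          · simp [fellerIterate]
          · exact (tsum_congr fun n => (e1 n).symm)
      _ = 1 + ∫ y in (0:ℝ)..x, (l y)⁻¹ *
            ∑' n : ℕ, lam^(n+1) * ∫ s in (0:ℝ)..y, 2 * l s * fellerIterate l n s := by
          rw [(hswap1 x hx).tsum_eq]
  -- part 1
  have part1 : ∀ x ∈ Icc (0:ℝ) r, HasDerivWithinAt U (U' x) (Icc 0 r) x := by
    intro x hx
    have hf : ContinuousOn (fun y => (l y)⁻¹ *
        ∑' n : ℕ, lam^(n+1) * ∫ s in (0:ℝ)..y, 2 * l s * fellerIterate l n s) (Icc 0 r) :=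
      hinv.mul hGcont
    have hF := (primitive_hasDerivWithinAt hf hx).const_add 1
    exact hF.congr (fun y hy => hUeq y hy) (hUeq x hx)
  have part2 : ContinuousOn U' (Icc 0 r) := hinv.mul hGcont
  have part3 : ∀ x ∈ Icc (0:ℝ) r, l x * U' x =
      ∑' n : ℕ, lam^(n+1) * ∫ y in (0:ℝ)..x, 2 * l y * fellerIterate l n y :=
    fun x hx => mul_inv_cancel_left₀ (hlne x hx) _
  -- second exchange of sum and integral
  have hswap2 : ∀ x ∈ Icc (0:ℝ) r,
      HasSum (fun n : ℕ => ∫ y in (0:ℝ)..x, lam^(n+1) * (2 * l y * fellerIterate l n y))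
        (∫ y in (0:ℝ)..x, 2 * lam * l y * ∑' n : ℕ, lam^n * fellerIterate l n y) := by
    intro x hx
    have hsub : Ι (0:ℝ) x ⊆ Icc (0:ℝ) r := by
      rw [uIoc_of_le hx.1]
      exact Ioc_subset_Icc_self.trans (Icc_subset_Icc le_rfl hx.2)
    have hbsum : Summable (fun n : ℕ =>
        |lam|^(n+1) * (2*hi*(c^n * r^n / n.factorial))) := by
      refine (hsa.mul_left (|lam| * (2*hi))).congr fun n => ?_
      rw [pow_succ, mul_pow, mul_pow]; ring
    refine intervalIntegral.hasSum_integral_of_dominated_convergence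
      (bound := fun n _ => |lam|^(n+1) * (2*hi*(c^n * r^n / n.factorial)))
      (fun n => ?_) (fun n => ae_of_all _ fun t ht => ?_) (ae_of_all _ fun t _ => hbsum)
      intervalIntegrable_const (ae_of_all _ fun t ht => ?_)
    · exact ((continuousOn_const.mul ((continuousOn_const.mul hl).mul (hucont n))).mono
        hsub).aestronglyMeasurable measurableSet_uIoc
    · have htIcc := hsub ht
      have h1 : |2 * l t| ≤ 2 * hi := by
        rw [abs_of_nonneg (by nlinarith [(hbd t htIcc).1])]
        nlinarith [(hbd t htIcc).2]
      calc ‖lam^(n+1) * (2 * l t * fellerIterate l n t)‖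
          = |lam|^(n+1) * (|2 * l t| * |fellerIterate l n t|) := by
            rw [norm_mul, norm_pow, norm_mul]; rfl
        _ ≤ |lam|^(n+1) * (2*hi*(c^n * r^n / n.factorial)) := by
            refine mul_le_mul_of_nonneg_left ?_ (by positivity)
            exact mul_le_mul h1 (hub n t htIcc) (abs_nonneg _) (by positivity)
    · have htIcc := hsub ht
      have h2 : (fun n : ℕ => lam^(n+1) * (2 * l t * fellerIterate l n t))
          = fun n : ℕ => (2 * lam * l t) * (lam^n * fellerIterate l n t) := by
        funext n; ring
      rw [h2]
      exact (hUsum t htIcc).hasSum.mul_left _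
  have hGeq : ∀ x ∈ Icc (0:ℝ) r,
      (∑' n : ℕ, lam^(n+1) * ∫ y in (0:ℝ)..x, 2 * l y * fellerIterate l n y)
        = ∫ y in (0:ℝ)..x, 2 * lam * l y * ∑' n : ℕ, lam^n * fellerIterate l n y := by
    intro x hx
    rw [← (hswap2 x hx).tsum_eq]
    exact tsum_congr fun n => (intervalIntegral.integral_const_mul _ _).symm
  -- part 4
  have part4 : ∀ x ∈ Ioo (0:ℝ) r,
      HasDerivAt (fun z => l z * U' z) (2 * lam * l x * U x) x := by
    intro x hx
    have hxIcc : x ∈ Icc (0:ℝ) r := Ioo_subset_Icc_self hx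
    have hhcont : ContinuousOn
        (fun y => 2 * lam * l y * ∑' n : ℕ, lam^n * fellerIterate l n y) (Icc 0 r) :=
      (continuousOn_const.mul hl).mul hUcont
    have hint : IntervalIntegrable
        (fun y => 2 * lam * l y * ∑' n : ℕ, lam^n * fellerIterate l n y) volume 0 x := by
      have : ContinuousOn
          (fun y => 2 * lam * l y * ∑' n : ℕ, lam^n * fellerIterate l n y) (uIcc 0 x) := by
        rw [uIcc_of_le hxIcc.1]
        exact hhcont.mono (Icc_subset_Icc le_rfl hxIcc.2)
      exact this.intervalIntegrable
    have hmeas : StronglyMeasurableAtFilter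
        (fun y => 2 * lam * l y * ∑' n : ℕ, lam^n * fellerIterate l n y) (nhds x) volume :=
      ContinuousOn.stronglyMeasurableAtFilter isOpen_Ioo (hhcont.mono Ioo_subset_Icc_self) x hx
    have hcontAt : ContinuousAt
        (fun y => 2 * lam * l y * ∑' n : ℕ, lam^n * fellerIterate l n y) x :=
      (hhcont x hxIcc).continuousAt (Icc_mem_nhds hx.1 hx.2)
    have hF : HasDerivAt
        (fun z => ∫ y in (0:ℝ)..z, 2 * lam * l y * ∑' n : ℕ, lam^n * fellerIterate l n y)
        (2 * lam * l x * ∑' n : ℕ, lam^n * fellerIterate l n x) x :=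
      intervalIntegral.integral_hasDerivAt_right hint hmeas hcontAt
    have heq : (fun z => l z * U' z) =ᶠ[nhds x]
        (fun z => ∫ y in (0:ℝ)..z, 2 * lam * l y * ∑' n : ℕ, lam^n * fellerIterate l n y) :=
      eventuallyEq_of_mem (Icc_mem_nhds hx.1 hx.2)
        (fun z hz => (part3 z hz).trans (hGeq z hz))
    exact hF.congr_of_eventuallyEq heq
  -- parts 5 and 6
  have part5 : U 0 = 1 := by
    show (∑' n : ℕ, lam^n * fellerIterate l n 0) = 1
    have hu0 : ∀ n : ℕ, n ≠ 0 → lam^n * fellerIterate l n 0 = 0 := by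
      intro n hn
      obtain ⟨m, rfl⟩ := Nat.exists_eq_succ_of_ne_zero hn
      have h0 : fellerIterate l (m+1) 0 = ∫ y in (0:ℝ)..(0:ℝ),
          (l y)⁻¹ * ∫ s in (0:ℝ)..y, 2 * l s * fellerIterate l m s := rfl
      rw [h0, intervalIntegral.integral_same, mul_zero]
    rw [tsum_eq_single 0 hu0]
    simp [fellerIterate]
  have part6 : l 0 * U' 0 = 0 := by
    rw [part3 0 (left_mem_Icc.2 hr.le)]
    simp [intervalIntegral.integral_same]
  exact ⟨part1, part2, part3, part4, part5, part6⟩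
end

section
/- Suppose μ : (−∞,0] → ℝ is convex, μ(0) = 0, μ is continuous at 0 (from the left), and μ is unbounded below on (−∞,0]. Then lim_{a→0⁺} I(a) = +∞ and lim_{a→+∞} I(a) = 0. -/
open Set Filter

/-- The Legendre-type transform `I(a) = sup_{λ ≤ 0} (aλ − μ(λ))`, valued in `EReal`. -/
noncomputable def legendreNeg (μ : ℝ → ℝ) (a : ℝ) : EReal :=
  ⨆ lam ∈ Set.Iic (0:ℝ), ((a * lam - μ lam : ℝ) : EReal)

/-- If `μ` is convex on `(−∞,0]`, `μ(0)=0`, `μ` is left-continuous at `0`, and `μ` is unbounded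
below on `(−∞,0]`, then `I(a) → +∞` as `a → 0⁺` and `I(a) → 0` as `a → +∞`. -/
theorem legendreNeg_limits (μ : ℝ → ℝ)
    (hconv : ConvexOn ℝ (Set.Iic (0:ℝ)) μ)
    (h0 : μ 0 = 0)
    (hcont : ContinuousWithinAt μ (Set.Iic 0) 0)
    (hunb : ∀ M : ℝ, ∃ lam ≤ (0:ℝ), μ lam < M) :
    Filter.Tendsto (legendreNeg μ) (nhdsWithin 0 (Set.Ioi 0)) (nhds (⊤ : EReal)) ∧
    Filter.Tendsto (legendreNeg μ) Filter.atTop (nhds (0 : EReal)) := by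
  have hI0 : ∀ a : ℝ, (0 : EReal) ≤ legendreNeg μ a := by
    intro a
    have : ((a * 0 - μ 0 : ℝ) : EReal) ≤ legendreNeg μ a :=
      le_iSup₂ (f := fun lam (_ : lam ∈ Set.Iic (0:ℝ)) => ((a * lam - μ lam : ℝ) : EReal))
        0 Set.self_mem_Iic
    simpa [h0] using this
  constructor
  · rw [EReal.tendsto_nhds_top_iff_real]
    intro M
    obtain ⟨lam0, hlam0, hμ0⟩ := hunb (-(M + 1))
    have habs : |lam0| = -lam0 := abs_of_nonpos hlam0
    have hδ : (0:ℝ) < 1 / (|lam0| + 1) := by positivity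
    filter_upwards [Ioo_mem_nhdsGT_of_mem (show (0:ℝ) ∈ Ico (0:ℝ) (1 / (|lam0| + 1)) from
      ⟨le_refl _, hδ⟩)] with a ha
    obtain ⟨ha0, ha1⟩ := ha
    have key : M < a * lam0 - μ lam0 := by
      have h1 : a * (-lam0 + 1) < 1 := by
        rw [habs] at ha1
        have hpos : (0:ℝ) < -lam0 + 1 := by nlinarith [abs_nonneg lam0, habs]
        have := (lt_div_iff₀ hpos).1 ha1
        linarith
      nlinarith
    calc (M : EReal) < ((a * lam0 - μ lam0 : ℝ) : EReal) := by exact_mod_cast key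
      _ ≤ legendreNeg μ a :=
        le_iSup₂ (f := fun lam (_ : lam ∈ Set.Iic (0:ℝ)) => ((a * lam - μ lam : ℝ) : EReal))
          lam0 hlam0
  · rw [tendsto_order]
    constructor
    · intro b hb
      filter_upwards [] with a
      exact lt_of_lt_of_le hb (hI0 a)
    · intro b hb
      obtain ⟨ε, hε0, hεb⟩ := EReal.exists_between_coe_real hb
      have hε0' : (0:ℝ) < ε := by exact_mod_cast hε0
      have hcont' : Tendsto μ (nhdsWithin 0 (Set.Iic 0)) (nhds 0) := by
        have := hcont
        rwa [ContinuousWithinAt, h0] at this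
      have hmem : μ ⁻¹' Set.Ioi (-ε) ∈ nhdsWithin (0:ℝ) (Set.Iic 0) :=
        hcont' (Ioi_mem_nhds (by linarith))
      rw [Metric.mem_nhdsWithin_iff] at hmem
      obtain ⟨δ, hδ0, hδ⟩ := hmem
      have hball : ∀ lam : ℝ, lam ≤ 0 → -δ < lam → -ε < μ lam := by
        intro lam h1 h2
        apply hδ
        constructor
        · simp only [Metric.mem_ball, Real.dist_eq, sub_zero]
          rw [abs_of_nonpos h1]; linarith
        · exact h1
      set m := μ (-(δ/2)) with hm
      have hmε : -ε < m := hball _ (by linarith) (by linarith)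
      set C := -m / (δ/2) with hC
      filter_upwards [eventually_ge_atTop C, eventually_gt_atTop (0:ℝ)] with a haC ha0
      have hub : legendreNeg μ a ≤ (ε : EReal) := by
        apply iSup₂_le
        intro lam hlam
        rw [EReal.coe_le_coe_iff]
        rcases le_or_gt lam (-(δ/2)) with hcase | hcase
        · -- convexity case
          have hlamneg : lam < 0 := by linarith
          set t := (δ/2) / (-lam) with ht
          have ht0 : 0 < t := by
            apply div_pos (by linarith) (by linarith)
          have ht1 : t ≤ 1 := by
            rw [ht, div_le_one (by linarith)]
            linarith
          have hlamne : lam ≠ 0 := ne_of_lt hlamneg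
          have hcomb : t • lam + (1 - t) • (0:ℝ) = -(δ/2) := by
            simp only [smul_eq_mul, mul_zero, add_zero, ht]
            rw [div_mul_eq_mul_div, div_eq_iff (neg_ne_zero.2 hlamne)]
            ring
          have h2 := hconv.2
          have hconvineq := @h2 lam hlam 0 Set.self_mem_Iic t (1 - t)
            (le_of_lt ht0) (by linarith) (by ring)
          rw [hcomb] at hconvineq
          simp only [smul_eq_mul, h0, mul_zero, add_zero] at hconvineq
          -- hconvineq : m ≤ t * μ lam
          have hmul : t * (-lam) = δ/2 := by
            rw [ht]
            exact div_mul_cancel₀ _ (neg_ne_zero.2 hlamne)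
          have hkey : m * (-lam) ≤ (δ/2) * μ lam := by
            have := mul_le_mul_of_nonneg_right hconvineq (by linarith : (0:ℝ) ≤ -lam)
            calc m * (-lam) ≤ t * μ lam * (-lam) := this
              _ = (t * (-lam)) * μ lam := by ring
              _ = (δ/2) * μ lam := by rw [hmul]
          -- haC : -m / (δ/2) ≤ a, so -m ≤ a * (δ/2)
          have haC' : -m ≤ a * (δ/2) := by
            rw [hC, div_le_iff₀ (by linarith : (0:ℝ) < δ/2)] at haC
            linarith
          nlinarith [mul_le_mul_of_nonneg_left haC' (show (0:ℝ) ≤ -lam by linarith)]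
        · -- continuity case
          have h1 : -ε < μ lam := hball lam hlam (by linarith)
          have h2 : a * lam ≤ 0 := mul_nonpos_of_nonneg_of_nonpos (le_of_lt ha0) hlam
          linarith
      exact lt_of_le_of_lt hub hεb
end
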